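/- The ideal I equals the ideal of ℝ[z₁,…,z_d] generated by the polynomials q̃_Θ, where Θ ranges over all d×d integer matrices each of whose columns is a 0-1 vector with exactly one or exactly two entries equal to 1 and which satisfy det Θ = ±1. -/

import Mathlib

open MvPolynomial

/-- For a `d×d` integer matrix `Θ` each of whose columns is a 0-1 vector with exactly one
or two entries equal to 1, the modified polynomial `q̃_Θ(z) = ∏_{columns θ} r̃_θ(z)`, where
`r̃_θ(z) = (1+z_k)/2` if `θ = e_k` and `r̃_θ(z) = (z_j+z_k)/2` if `θ = e_j + e_k`, `j ≠ k`. -/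
noncomputable def qtilde {d : ℕ} (Θ : Matrix (Fin d) (Fin d) ℤ) : MvPolynomial (Fin d) ℝ :=
  ∏ c : Fin d,
    (C (1 / 2 : ℝ) *
      ((if (∑ i, Θ i c) = 1 then 1 else 0) + ∑ i : Fin d, C ((Θ i c : ℝ)) * X i))

namespace Stmt7Aux

def gens (d : ℕ) : Set (MvPolynomial (Fin d) ℝ) :=
  {q : MvPolynomial (Fin d) ℝ | ∃ Θ : Matrix (Fin d) (Fin d) ℤ,
        (∀ i c, Θ i c = 0 ∨ Θ i c = 1) ∧
        (∀ c, (∑ i, Θ i c) = 1 ∨ (∑ i, Θ i c) = 2) ∧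
        (Θ.det = 1 ∨ Θ.det = -1) ∧
        q = qtilde Θ}

variable {d : ℕ}

lemma eval_qtilde (Θ : Matrix (Fin d) (Fin d) ℤ) (ε : Fin d → ℝ) :
    eval ε (qtilde Θ) =
      ∏ c : Fin d, ((1 / 2 : ℝ) *
        ((if (∑ i, Θ i c) = 1 then 1 else 0) + ∑ i : Fin d, (Θ i c : ℝ) * ε i)) := by
  simp [qtilde, apply_ite (eval ε)]

lemma eval_gens_zero (ε : Fin d → ℝ) (hε : ∀ i, ε i = -1 ∨ ε i = 1)
    (hne : ε ≠ fun _ => 1) (g : MvPolynomial (Fin d) ℝ) (hg : g ∈ gens d) :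
    eval ε g = 0 := by
  obtain ⟨Θ, h01, hsum, hdet, rfl⟩ := hg
  rw [eval_qtilde]
  by_contra hne0
  have hfac : ∀ c : Fin d, ((1 / 2 : ℝ) *
      ((if (∑ i, Θ i c) = 1 then 1 else 0) + ∑ i : Fin d, (Θ i c : ℝ) * ε i)) ≠ 0 :=
    fun c => Finset.prod_ne_zero_iff.mp hne0 c (Finset.mem_univ c)
  set y : Fin d → ℤ := fun i => if ε i = 1 then 0 else 1 with hy
  have hy01 : ∀ i, y i = 0 ∨ y i = 1 := by
    intro i; by_cases h : ε i = 1 <;> simp [hy, h]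
  have hεy : ∀ i, ε i = 1 - 2 * (y i : ℝ) := by
    intro i
    rcases hε i with h | h
    · have : ε i ≠ 1 := by rw [h]; norm_num
      rw [hy]; simp only [if_neg this, h]; norm_num
    · simp [hy, h]
  -- each column sum of Θ * y is even
  have hteven : ∀ c : Fin d, (∑ i, Θ i c * y i) ≠ 1 ∧
      0 ≤ (∑ i, Θ i c * y i) ∧ (∑ i, Θ i c * y i) ≤ 2 := by
    intro c
    have h2 : ((if (∑ i, Θ i c) = 1 then 1 else 0) : ℝ) + ((∑ i, Θ i c : ℤ) : ℝ) = 2 := by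
      rcases hsum c with h | h <;> simp [h] <;> norm_num
    have hs : (∑ i : Fin d, (Θ i c : ℝ) * ε i)
        = ((∑ i, Θ i c : ℤ) : ℝ) - 2 * ((∑ i, Θ i c * y i : ℤ) : ℝ) := by
      push_cast
      rw [Finset.mul_sum, ← Finset.sum_sub_distrib]
      refine Finset.sum_congr rfl fun i _ => ?_
      rw [hεy i]; ring
    have hne1 : ((∑ i, Θ i c * y i : ℤ) : ℝ) ≠ 1 := by
      intro h1
      apply hfac c
      rw [hs, h1]
      have := h2
      nlinarith [h2]
    refine ⟨fun h => hne1 (by rw [h]; norm_num), ?_, ?_⟩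
    · exact Finset.sum_nonneg fun i _ => by
        rcases h01 i c with h | h <;> rcases hy01 i with h' | h' <;> simp [h, h']
    · calc (∑ i, Θ i c * y i) ≤ ∑ i, Θ i c := by
            refine Finset.sum_le_sum fun i _ => ?_
            rcases h01 i c with h | h <;> rcases hy01 i with h' | h' <;> simp [h, h']
         _ ≤ 2 := by rcases hsum c with h | h <;> omega
  -- pass to ZMod 2
  set x : Fin d → ZMod 2 := fun i => ((y i : ℤ) : ZMod 2) with hx
  set M : Matrix (Fin d) (Fin d) (ZMod 2) := Θ.map (Int.cast) with hM
  have hvm : Matrix.vecMul x M = 0 := by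
    funext c
    have ht := hteven c
    have : (∑ i, Θ i c * y i) = 0 ∨ (∑ i, Θ i c * y i) = 2 := by omega
    have hcast : (((∑ i, Θ i c * y i : ℤ)) : ZMod 2) = 0 := by
      rcases this with h | h <;> rw [h] <;> decide
    calc Matrix.vecMul x M c = ∑ i, x i * M i c := rfl
      _ = (((∑ i, Θ i c * y i : ℤ)) : ZMod 2) := by
          push_cast [hx, hM, Matrix.map_apply]
          exact Finset.sum_congr rfl fun i _ => mul_comm _ _
      _ = 0 := hcast
  have hdetM : IsUnit M.det := by
    have : M.det = ((Θ.det : ℤ) : ZMod 2) := (RingHom.map_det (Int.castRingHom (ZMod 2)) Θ).symm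
    rcases hdet with h | h <;> rw [this, h] <;> decide
  have hx0 : x = 0 := by
    have h1 : x = Matrix.vecMul (Matrix.vecMul x M) M⁻¹ := by
      rw [Matrix.vecMul_vecMul, Matrix.mul_nonsing_inv M hdetM, Matrix.vecMul_one]
    rw [hvm, Matrix.zero_vecMul] at h1
    exact h1
  apply hne
  funext i
  have : x i = 0 := by rw [hx0]; rfl
  rcases hy01 i with h | h
  · by_cases h' : ε i = 1
    · exact h'
    · exfalso; simp [hy, h'] at h
  · exfalso
    have h1 : ((y i : ℤ) : ZMod 2) = 0 := this
    rw [h] at h1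
    norm_num at h1


/-- the factor polynomial attached to a column -/
noncomputable def fac (o : Option (Fin d)) (c : Fin d) : MvPolynomial (Fin d) ℝ :=
  match o with
  | none => C (1/2 : ℝ) * (1 + X c)
  | some x => C (1/2 : ℝ) * (X x + X c)

/-- the matrix whose `c`-th column is `e c`, resp. `e x + e c` if `G c = some x`. -/
def colM (G : Fin d → Option (Fin d)) : Matrix (Fin d) (Fin d) ℤ :=
  fun i c => (if i = c then 1 else 0) + (if G c = some i then 1 else 0)

lemma colM_sum (G : Fin d → Option (Fin d)) (hG : ∀ c x, G c = some x → x ≠ c) (c : Fin d) :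
    (∑ i, colM G i c) = if (G c).isSome then 2 else 1 := by
  unfold colM
  rw [Finset.sum_add_distrib]
  rcases hGc : G c with _ | x
  · simp
  · have hxc : x ≠ c := hG c x hGc
    simp only [hGc, Option.isSome_some, if_true, Option.some.injEq]
    rw [Finset.sum_ite_eq' Finset.univ c (fun _ => (1:ℤ)),
        Finset.sum_ite_eq Finset.univ x (fun _ => (1:ℤ))]
    simp

lemma colM_01 (G : Fin d → Option (Fin d)) (hG : ∀ c x, G c = some x → x ≠ c) (i c : Fin d) :
    colM G i c = 0 ∨ colM G i c = 1 := by
  unfold colM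
  by_cases h : i = c
  · subst h
    have : G i ≠ some i := fun hh => (hG i i hh) rfl
    simp [this]
  · simp only [h, if_false, zero_add]
    by_cases h2 : G c = some i <;> simp [h2]

lemma colM_det (σ : Equiv.Perm (Fin d)) (G : Fin d → Option (Fin d))
    (hG : ∀ c x, G c = some x → σ x < σ c) : (colM G).det = 1 := by
  have hG' : ∀ c x, G c = some x → x ≠ c := by
    intro c x h hxc
    exact absurd (hG c x h) (by rw [hxc]; exact lt_irrefl _)
  rw [← Matrix.det_submatrix_equiv_self σ.symm (colM G)]
  have htri : ((colM G).submatrix σ.symm σ.symm).BlockTriangular id := by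
    intro i j hij
    simp only [Matrix.submatrix_apply, colM]
    have h1 : σ.symm i ≠ σ.symm j := fun h => (ne_of_gt hij) (σ.symm.injective h)
    rw [if_neg h1, if_neg, add_zero]
    intro h2
    have := hG _ _ h2
    simp only [Equiv.apply_symm_apply] at this
    exact absurd hij (not_lt.mpr this.le)
  rw [Matrix.det_of_upperTriangular htri]
  apply Finset.prod_eq_one
  intro i _
  simp only [Matrix.submatrix_apply, colM]
  have : G (σ.symm i) ≠ some (σ.symm i) := fun hh => (hG' _ _ hh) rfl
  simp [this]

lemma qtilde_colM (G : Fin d → Option (Fin d)) (hG : ∀ c x, G c = some x → x ≠ c) :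
    qtilde (colM G) = ∏ c, fac (G c) c := by
  unfold qtilde
  refine Finset.prod_congr rfl fun c _ => ?_
  have hsum := colM_sum G hG c
  have hX : ∀ i, (C ((colM G i c : ℤ) : ℝ) * X i : MvPolynomial (Fin d) ℝ)
      = (if i = c then X i else 0) + (if G c = some i then X i else 0) := by
    intro i
    by_cases h : i = c
    · subst h
      have : G i ≠ some i := fun hh => (hG i i hh) rfl
      simp [colM, this]
    · by_cases h2 : G c = some i <;> simp [colM, h, h2]
  rw [Finset.sum_congr rfl fun i _ => hX i, Finset.sum_add_distrib,
      Finset.sum_ite_eq' Finset.univ c (fun i => (X i : MvPolynomial (Fin d) ℝ))]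
  rcases hGc : G c with _ | x
  · rw [hsum]
    simp only [hGc, Option.isSome_none, if_false, Bool.false_eq_true]
    simp [fac]
  · rw [hsum]
    simp only [hGc, Option.isSome_some, if_true]
    have : (∑ i, if (some x : Option (Fin d)) = some i then (X i : MvPolynomial (Fin d) ℝ) else 0)
        = X x := by
      simp only [Option.some.injEq]
      rw [Finset.sum_ite_eq Finset.univ x (fun i => (X i : MvPolynomial (Fin d) ℝ))]
      simp
    rw [this]
    simp only [fac]
    norm_num
    ring

lemma colM_mem_gens (σ : Equiv.Perm (Fin d)) (G : Fin d → Option (Fin d))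
    (hG : ∀ c x, G c = some x → σ x < σ c) : qtilde (colM G) ∈ gens d := by
  have hG' : ∀ c x, G c = some x → x ≠ c := by
    intro c x h hxc
    exact absurd (hG c x h) (by rw [hxc]; exact lt_irrefl _)
  refine ⟨colM G, colM_01 G hG', fun c => ?_, Or.inl (colM_det σ G hG), rfl⟩
  rw [colM_sum G hG' c]
  rcases G c with _ | x <;> simp

lemma C_half_sq : (C (4:ℝ) : MvPolynomial (Fin d) ℝ) * (C (1/2:ℝ) * C (1/2:ℝ)) = 1 := by
  rw [← C_mul, ← C_mul]
  norm_num

lemma fac_identity (p x : Fin d) :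
    (fac none p : MvPolynomial (Fin d) ℝ) + fac none x - fac (some x) p = 1 := by
  have h2 : (C (1/2:ℝ) : MvPolynomial (Fin d) ℝ) * C 2 = 1 := by
    rw [← C_mul]; norm_num
  have hC2 : (C (2:ℝ) : MvPolynomial (Fin d) ℝ) = 2 := map_ofNat C 2
  calc (fac none p : MvPolynomial (Fin d) ℝ) + fac none x - fac (some x) p
      = C (1/2:ℝ) * C 2 := by simp only [fac]; rw [hC2]; ring
    _ = 1 := h2

lemma master [NeZero d] (σ : Equiv.Perm (Fin d)) (n : ℕ) :
    ∀ (T : Finset (Fin d)) (f : Fin d → Option (Fin d)),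
      σ.symm 0 ∉ T →
      (∀ c ∈ T, ∀ x, f c = some x → σ x < σ c) →
      (Finset.univ \ insert (σ.symm 0) T).card = n + 1 →
      (X (σ.symm 0) ^ 2 - 1) * (∏ c ∈ T, fac (f c) c) ∈ Ideal.span (gens d) := by
  set j := σ.symm 0 with hj
  induction n with
  | zero =>
    intro T f hjT hadm hcard
    obtain ⟨i, hiL⟩ := Finset.card_eq_one.mp hcard
    have hi : i ∈ Finset.univ \ insert j T := by rw [hiL]; exact Finset.mem_singleton_self i
    have hij : i ≠ j := by
      rcases Finset.mem_sdiff.mp hi with ⟨-, h⟩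
      exact fun hh => h (by rw [hh]; exact Finset.mem_insert_self j T)
    have hiT : i ∉ T := by
      rcases Finset.mem_sdiff.mp hi with ⟨-, h⟩
      exact fun hh => h (Finset.mem_insert_of_mem hh)
    set G₁ : Fin d → Option (Fin d) :=
      fun c => if c = i then some j else if c ∈ T then f c else none with hG₁
    set G₂ : Fin d → Option (Fin d) :=
      fun c => if c = i then none else if c ∈ T then f c else none with hG₂
    have hσi : (0 : Fin d) < σ i := by
      rw [Fin.pos_iff_ne_zero']
      intro hh
      exact hij (by rw [← σ.symm_apply_apply i, hh, ← hj])
    have hadm₁ : ∀ c x, G₁ c = some x → σ x < σ c := by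
      intro c x h
      by_cases hc : c = i
      · subst hc
        simp only [hG₁, if_pos rfl, Option.some.injEq] at h
        rw [← h, hj, σ.apply_symm_apply]
        exact hσi
      · simp only [hG₁, if_neg hc] at h
        by_cases hcT : c ∈ T
        · rw [if_pos hcT] at h; exact hadm c hcT x h
        · rw [if_neg hcT] at h; exact absurd h (by simp)
    have hadm₂ : ∀ c x, G₂ c = some x → σ x < σ c := by
      intro c x h
      by_cases hc : c = i
      · subst hc; simp [hG₂] at h
      · simp only [hG₂, if_neg hc] at h
        by_cases hcT : c ∈ T
        · rw [if_pos hcT] at h; exact hadm c hcT x h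
        · rw [if_neg hcT] at h; exact absurd h (by simp)
    have hne₁ : ∀ c x, G₁ c = some x → x ≠ c := by
      intro c x h hxc
      exact absurd (hadm₁ c x h) (by rw [hxc]; exact lt_irrefl _)
    have hne₂ : ∀ c x, G₂ c = some x → x ≠ c := by
      intro c x h hxc
      exact absurd (hadm₂ c x h) (by rw [hxc]; exact lt_irrefl _)
    -- erase i = insert j T
    have herase : Finset.univ.erase i = insert j T := by
      ext c
      have hc := Finset.ext_iff.mp hiL c
      simp only [Finset.mem_sdiff, Finset.mem_univ, true_and, Finset.mem_singleton] at hc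
      simp only [Finset.mem_erase, Finset.mem_univ, and_true]
      constructor
      · intro hci
        by_contra hcn
        exact hci (hc.mp hcn)
      · intro hcin hci
        subst hci
        exact (Finset.mem_sdiff.mp hi).2 hcin
    have hjT' : j ∉ Finset.univ.erase i → False := by
      intro hh
      exact hh (herase ▸ Finset.mem_insert_self j T)
    -- product formulas
    have hprod : ∀ (G : Fin d → Option (Fin d)), (∀ c ∈ T, G c = f c) → (G j = none) →
        ∏ c ∈ Finset.univ.erase i, fac (G c) c
          = fac none j * ∏ c ∈ T, fac (f c) c := by
      intro G hGT hGj
      rw [herase, Finset.prod_insert hjT, hGj]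
      congr 1
      exact Finset.prod_congr rfl fun c hc => by rw [hGT c hc]
    have hR : ∏ c ∈ Finset.univ.erase i, fac (G₁ c) c
        = fac none j * ∏ c ∈ T, fac (f c) c := by
      apply hprod
      · intro c hc
        have : c ≠ i := fun hh => hiT (hh ▸ hc)
        simp [hG₁, this, hc]
      · simp [hG₁, hij.symm, hjT]
    have hR₂ : ∏ c ∈ Finset.univ.erase i, fac (G₂ c) c
        = fac none j * ∏ c ∈ T, fac (f c) c := by
      apply hprod
      · intro c hc
        have : c ≠ i := fun hh => hiT (hh ▸ hc)
        simp [hG₂, this, hc]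
      · simp [hG₂, hij.symm, hjT]
    have hq₁ : qtilde (colM G₁) = fac (some j) i * (fac none j * ∏ c ∈ T, fac (f c) c) := by
      rw [qtilde_colM G₁ hne₁, ← Finset.mul_prod_erase Finset.univ _ (Finset.mem_univ i), hR]
      congr 2
      simp [hG₁]
    have hq₂ : qtilde (colM G₂) = fac none i * (fac none j * ∏ c ∈ T, fac (f c) c) := by
      rw [qtilde_colM G₂ hne₂, ← Finset.mul_prod_erase Finset.univ _ (Finset.mem_univ i), hR₂]
      congr 2
      simp [hG₂]
    have key : (X j ^ 2 - 1) * (∏ c ∈ T, fac (f c) c)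
        = C (4:ℝ) * qtilde (colM G₁) - C (4:ℝ) * qtilde (colM G₂) := by
      rw [hq₁, hq₂]
      simp only [fac]
      calc (X j ^ 2 - 1) * (∏ c ∈ T, fac (f c) c)
          = (C (4:ℝ) * (C (1/2:ℝ) * C (1/2:ℝ))) * ((X j ^ 2 - 1) * ∏ c ∈ T, fac (f c) c) := by
            rw [C_half_sq, one_mul]
        _ = C (4:ℝ) * (C (1/2:ℝ) * (X j + X i) * (C (1/2:ℝ) * (1 + X j) * ∏ c ∈ T, fac (f c) c))
            - C (4:ℝ) * (C (1/2:ℝ) * (1 + X i) * (C (1/2:ℝ) * (1 + X j) * ∏ c ∈ T, fac (f c) c)) := by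
            ring
    rw [key]
    exact sub_mem
      (Ideal.mul_mem_left _ _ (Ideal.subset_span (colM_mem_gens σ G₁ hadm₁)))
      (Ideal.mul_mem_left _ _ (Ideal.subset_span (colM_mem_gens σ G₂ hadm₂)))
  | succ n ih =>
    intro T f hjT hadm hcard
    set L := Finset.univ \ insert j T with hL
    have hLcard : L.card = n + 2 := hcard
    set Lσ := L.image σ with hLσ
    have hLσcard : Lσ.card = n + 2 := by
      rw [hLσ, Finset.card_image_of_injective _ σ.injective, hLcard]
    have hLσne : Lσ.Nonempty := Finset.card_pos.mp (by omega)
    set P := Lσ.max' hLσne with hP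
    have hPmem : P ∈ Lσ := Lσ.max'_mem hLσne
    have hErne : (Lσ.erase P).Nonempty := by
      apply Finset.card_pos.mp
      rw [Finset.card_erase_of_mem hPmem, hLσcard]
      omega
    obtain ⟨ξ, hξ⟩ := hErne
    have hξP : ξ < P := lt_of_le_of_ne (Lσ.le_max' ξ (Finset.mem_of_mem_erase hξ))
      (Finset.ne_of_mem_erase hξ)
    set p := σ.symm P with hp
    set x := σ.symm ξ with hx
    have hpL : p ∈ L := by
      obtain ⟨a, haL, ha⟩ := Finset.mem_image.mp hPmem
      rwa [hp, ← ha, σ.symm_apply_apply]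
    have hxL : x ∈ L := by
      obtain ⟨a, haL, ha⟩ := Finset.mem_image.mp (Finset.mem_of_mem_erase hξ)
      rwa [hx, ← ha, σ.symm_apply_apply]
    have hσxp : σ x < σ p := by
      rw [hp, hx, σ.apply_symm_apply, σ.apply_symm_apply]
      exact hξP
    have hxp : x ≠ p := fun hh => absurd hσxp (by rw [hh]; exact lt_irrefl _)
    have hpT : p ∉ T := fun hh =>
      (Finset.mem_sdiff.mp hpL).2 (Finset.mem_insert_of_mem hh)
    have hpj : p ≠ j := fun hh =>
      (Finset.mem_sdiff.mp hpL).2 (by rw [hh]; exact Finset.mem_insert_self j T)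
    have hxT : x ∉ T := fun hh =>
      (Finset.mem_sdiff.mp hxL).2 (Finset.mem_insert_of_mem hh)
    have hxj : x ≠ j := fun hh =>
      (Finset.mem_sdiff.mp hxL).2 (by rw [hh]; exact Finset.mem_insert_self j T)
    -- three inductive memberships
    have hcard' : ∀ z : Fin d, z ∈ L →
        (Finset.univ \ insert j (insert z T)).card = n + 1 := by
      intro z hz
      rw [Finset.insert_comm, Finset.sdiff_insert, ← hL, Finset.card_erase_of_mem hz, hLcard]
      omega
    have hmem : ∀ (z : Fin d) (o : Option (Fin d)), z ∈ L → (z ≠ j) →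
        (∀ y, o = some y → σ y < σ z) →
        (X j ^ 2 - 1) * (fac o z * ∏ c ∈ T, fac (f c) c) ∈ Ideal.span (gens d) := by
      intro z o hz hzj ho
      have hzT : z ∉ T := fun hh => (Finset.mem_sdiff.mp hz).2 (Finset.mem_insert_of_mem hh)
      have hres := ih (insert z T) (Function.update f z o)
        (by
          intro hh
          rcases Finset.mem_insert.mp hh with h | h
          · exact hzj h.symm
          · exact hjT h)
        (by
          intro c hc y hy
          by_cases hcz : c = z
          · subst hcz
            rw [Function.update_self] at hy
            exact ho y hy
          · rw [Function.update_of_ne hcz] at hy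
            have hcT : c ∈ T := by
              rcases Finset.mem_insert.mp hc with h | h
              · exact absurd h hcz
              · exact h
            exact hadm c hcT y hy)
        (hcard' z hz)
      rwa [Finset.prod_insert hzT, Function.update_self,
        Finset.prod_congr rfl fun c hc =>
          (by rw [Function.update_of_ne (fun hh : c = z => hzT (hh ▸ hc))] :
            fac (Function.update f z o c) c = fac (f c) c)] at hres
    have h1 := hmem p none hpL hpj (by simp)
    have h2 := hmem x none hxL hxj (by simp)
    have h3 := hmem p (some x) hpL hpj (by
      intro y hy
      rw [Option.some_inj] at hy
      rw [← hy]
      exact hσxp)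
    have key : (X j ^ 2 - 1) * (∏ c ∈ T, fac (f c) c)
        = (X j ^ 2 - 1) * (fac none p * ∏ c ∈ T, fac (f c) c)
          + (X j ^ 2 - 1) * (fac none x * ∏ c ∈ T, fac (f c) c)
          - (X j ^ 2 - 1) * (fac (some x) p * ∏ c ∈ T, fac (f c) c) := by
      calc (X j ^ 2 - 1) * (∏ c ∈ T, fac (f c) c)
          = ((X j ^ 2 - 1) * (∏ c ∈ T, fac (f c) c))
              * (fac none p + fac none x - fac (some x) p) := by
            rw [fac_identity, mul_one]
        _ = _ := by ring
    rw [key]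
    exact sub_mem (add_mem h1 h2) h3


def sqSet (d : ℕ) : Set (MvPolynomial (Fin d) ℝ) :=
  {q : MvPolynomial (Fin d) ℝ | ∃ i, q = X i ^ 2 - 1}

lemma rename_mem_sq {d e : ℕ} (g : Fin d → Fin e) (p : MvPolynomial (Fin d) ℝ)
    (hp : p ∈ Ideal.span (sqSet d)) : rename g p ∈ Ideal.span (sqSet e) := by
  refine Submodule.span_induction (p := fun x _ => rename g x ∈ Ideal.span (sqSet e))
    ?_ ?_ ?_ ?_ hp
  · rintro x ⟨i, rfl⟩
    have : rename g ((X i : MvPolynomial (Fin d) ℝ) ^ 2 - 1) = X (g i) ^ 2 - 1 := by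
      simp
    rw [this]
    exact Ideal.subset_span ⟨g i, rfl⟩
  · simp only [map_zero]; exact zero_mem _
  · intro a b _ _ ha hb
    rw [map_add]; exact add_mem ha hb
  · intro a b _ hb
    rw [smul_eq_mul, map_mul]
    exact Ideal.mul_mem_left _ _ hb

lemma cube_mem : ∀ (d : ℕ) (p : MvPolynomial (Fin d) ℝ),
    (∀ ε : Fin d → ℝ, (∀ i, ε i = -1 ∨ ε i = 1) → eval ε p = 0) →
    p ∈ Ideal.span (sqSet d) := by
  intro d
  induction d with
  | zero =>
    intro p hp
    have hpc := eq_C_of_isEmpty p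
    have h0 := hp (fun _ => 1) (fun i => i.elim0)
    rw [hpc, eval_C] at h0
    rw [hpc, h0, map_zero]
    exact zero_mem _
  | succ n ih =>
    intro p hp
    set q : Polynomial (MvPolynomial (Fin n) ℝ) := finSuccEquiv ℝ n p with hq
    set m : Polynomial (MvPolynomial (Fin n) ℝ) := Polynomial.X ^ 2 - Polynomial.C 1 with hm
    have hmonic : m.Monic := Polynomial.monic_X_pow_sub_C 1 (two_ne_zero)
    set r : Polynomial (MvPolynomial (Fin n) ℝ) := q %ₘ m with hr
    set Q : Polynomial (MvPolynomial (Fin n) ℝ) := q /ₘ m with hQ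
    have hqr : r + m * Q = q := Polynomial.modByMonic_add_div q m
    have hdeg : r.degree < 2 := by
      have h2 : m.degree = 2 := Polynomial.degree_X_pow_sub_C (by norm_num) 1
      have := Polynomial.degree_modByMonic_lt q hmonic
      rwa [h2] at this
    have hnd : r.natDegree ≤ 1 := by
      by_cases hr0 : r = 0
      · simp [hr0]
      · have h3 : r.natDegree < 2 := (Polynomial.natDegree_lt_iff_degree_lt hr0).mpr
          (by exact_mod_cast hdeg)
        omega
    set a : MvPolynomial (Fin n) ℝ := r.coeff 0 with ha
    set b : MvPolynomial (Fin n) ℝ := r.coeff 1 with hb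
    have hrab : r = Polynomial.C b * Polynomial.X + Polynomial.C a :=
      Polynomial.eq_X_add_C_of_natDegree_le_one hnd
    -- evaluations
    have hevals : ∀ ε : Fin n → ℝ, (∀ i, ε i = -1 ∨ ε i = 1) →
        eval ε a = 0 ∧ eval ε b = 0 := by
      intro ε hε
      have hcons : ∀ (y : ℝ), y = -1 ∨ y = 1 →
          eval ε a + eval ε b * y = 0 := by
        intro y hy
        have hy1 : ∀ i, (Fin.cons y ε : Fin (n+1) → ℝ) i = -1 ∨ (Fin.cons y ε : Fin (n+1) → ℝ) i = 1 := by
          intro i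
          rcases Fin.eq_zero_or_eq_succ i with rfl | ⟨k, rfl⟩
          · simpa using hy
          · simpa using hε k
        have h1 := hp (Fin.cons y ε) hy1
        rw [eval_eq_eval_mv_eval'] at h1
        rw [← hq, ← hqr, hrab] at h1
        have hy2 : y ^ 2 - 1 = 0 := by rcases hy with h | h <;> rw [h] <;> ring
        simp only [Polynomial.map_add, Polynomial.map_mul, Polynomial.map_sub,
          Polynomial.map_pow, Polynomial.map_X, Polynomial.map_C, Polynomial.map_one,
          Polynomial.eval_add, Polynomial.eval_mul, Polynomial.eval_sub, Polynomial.eval_pow,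
          Polynomial.eval_X, Polynomial.eval_C, Polynomial.eval_one, map_one, hm] at h1
        rw [hy2, zero_mul, add_zero] at h1
        linarith [h1]
      have hA := hcons 1 (Or.inr rfl)
      have hB := hcons (-1) (Or.inl rfl)
      constructor <;> linarith
    have haI : a ∈ Ideal.span (sqSet n) := ih a fun ε hε => (hevals ε hε).1
    have hbI : b ∈ Ideal.span (sqSet n) := ih b fun ε hε => (hevals ε hε).2
    -- reconstruct p
    have hsymmX : (finSuccEquiv ℝ n).symm Polynomial.X = (X 0 : MvPolynomial (Fin (n+1)) ℝ) := by
      rw [← finSuccEquiv_X_zero (R := ℝ) (n := n)]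
      exact (finSuccEquiv ℝ n).symm_apply_apply _
    have hfwd : ∀ u : MvPolynomial (Fin n) ℝ,
        finSuccEquiv ℝ n (rename Fin.succ u) = Polynomial.C u := by
      intro u
      induction u using MvPolynomial.induction_on with
      | C r => simp [finSuccEquiv_apply]
      | add u v hu hv => rw [map_add, map_add, hu, hv, map_add]
      | mul_X u i hu => rw [map_mul, map_mul, rename_X, hu, finSuccEquiv_X_succ, ← Polynomial.C_mul]
    have hsymmC : ∀ u : MvPolynomial (Fin n) ℝ,
        (finSuccEquiv ℝ n).symm (Polynomial.C u) = rename Fin.succ u := by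
      intro u
      apply (finSuccEquiv ℝ n).injective
      rw [(finSuccEquiv ℝ n).apply_symm_apply, hfwd]
    have h2 : (finSuccEquiv ℝ n).symm (r + m * Q) = p := by
      rw [hqr, hq]
      exact (finSuccEquiv ℝ n).symm_apply_apply p
    have hsymm_m : (finSuccEquiv ℝ n).symm m = (X 0 : MvPolynomial (Fin (n+1)) ℝ) ^ 2 - 1 := by
      rw [hm, map_sub, map_pow, hsymmX, hsymmC, map_one]
    have hsymm_r : (finSuccEquiv ℝ n).symm r
        = rename Fin.succ b * X 0 + rename Fin.succ a := by
      rw [hrab, map_add, map_mul, hsymmX, hsymmC, hsymmC]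
    rw [← h2, map_add, map_mul, hsymm_m, hsymm_r]
    refine add_mem (add_mem ?_ ?_) ?_
    · exact Ideal.mul_mem_right _ _ (rename_mem_sq _ _ hbI)
    · exact rename_mem_sq _ _ haI
    · exact Ideal.mul_mem_right _ _ (Ideal.subset_span ⟨0, rfl⟩)


lemma qtilde_id_eq : qtilde (colM (fun _ : Fin d => none)) = ∏ c, fac none c :=
  qtilde_colM _ (by simp)

lemma id_gen_mem : qtilde (colM (fun _ : Fin d => none)) ∈ gens d :=
  colM_mem_gens (Equiv.refl _) _ (by simp)

lemma eval_one_qtilde_id :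
    eval (fun _ => (1:ℝ)) (qtilde (colM (fun _ : Fin d => none))) = 1 := by
  rw [qtilde_id_eq, map_prod]
  apply Finset.prod_eq_one
  intro c _
  simp only [fac]
  rw [map_mul, eval_C, map_add, map_one, eval_X]
  norm_num

lemma sq_mem (hd : 1 ≤ d) (j : Fin d) :
    (X j ^ 2 - 1 : MvPolynomial (Fin d) ℝ) ∈ Ideal.span (gens d) := by
  haveI : NeZero d := ⟨by omega⟩
  rcases lt_or_ge d 2 with h2 | h2
  · have hd1 : d = 1 := by omega
    subst hd1
    have hj : j = 0 := Subsingleton.elim j 0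
    subst hj
    have hC : (C (2:ℝ) : MvPolynomial (Fin 1) ℝ) * C (1/2:ℝ) = 1 := by
      rw [← C_mul]; norm_num
    have hkey : (X (0:Fin 1) ^ 2 - 1 : MvPolynomial (Fin 1) ℝ)
        = (C 2 * (X 0 - 1)) * qtilde (colM (fun _ : Fin 1 => none)) := by
      rw [qtilde_id_eq, Fin.prod_univ_one]
      have hfac : (fac none (0 : Fin 1) : MvPolynomial (Fin 1) ℝ)
          = C (1/2:ℝ) * (1 + X 0) := rfl
      rw [hfac]
      calc (X (0:Fin 1) ^ 2 - 1 : MvPolynomial (Fin 1) ℝ)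
          = (C (2:ℝ) * C (1/2:ℝ)) * ((X 0 - 1) * (1 + X 0)) := by rw [hC]; ring
        _ = (C 2 * (X 0 - 1)) * (C (1/2) * (1 + X 0)) := by ring
    rw [hkey]
    exact Ideal.mul_mem_left _ _ (Ideal.subset_span id_gen_mem)
  · have hsymm : (Equiv.swap (0 : Fin d) j).symm 0 = j := by
      rw [Equiv.symm_swap, Equiv.swap_apply_left]
    have hcard : (Finset.univ \ insert ((Equiv.swap (0 : Fin d) j).symm 0) (∅ : Finset (Fin d))).card
        = (d - 2) + 1 := by
      rw [hsymm, show insert j (∅ : Finset (Fin d)) = {j} from rfl,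
        Finset.card_sdiff_of_subset (Finset.subset_univ _),
        Finset.card_singleton, Finset.card_univ, Fintype.card_fin]
      omega
    have := master (Equiv.swap (0 : Fin d) j) (d - 2) ∅ (fun _ => none)
      (by simp) (by simp) hcard
    rw [hsymm, Finset.prod_empty, mul_one] at this
    exact this

lemma sq_span_le (hd : 1 ≤ d) : Ideal.span (sqSet d) ≤ Ideal.span (gens d) := by
  rw [Ideal.span_le]
  rintro q ⟨i, rfl⟩
  exact sq_mem hd i

end Stmt7Aux

open Stmt7Aux

/-- The ideal `I` of polynomials vanishing on `Z' = {ε ∈ {−1,1}^d : ε ≠ (1,…,1)}`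
equals the ideal generated by the polynomials `q̃_Θ`, where `Θ` ranges over the `d×d`
integer matrices whose columns are 0-1 vectors with exactly one or two entries equal
to 1 and which satisfy `det Θ = ±1`. -/
theorem stmt_7 (d : ℕ) (hd : 1 ≤ d) (p : MvPolynomial (Fin d) ℝ) :
    (∀ ε : Fin d → ℝ, (∀ i, ε i = -1 ∨ ε i = 1) → ε ≠ (fun _ => 1) →
      eval ε p = 0) ↔
    p ∈ Ideal.span
      {q : MvPolynomial (Fin d) ℝ | ∃ Θ : Matrix (Fin d) (Fin d) ℤ,
        (∀ i c, Θ i c = 0 ∨ Θ i c = 1) ∧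
        (∀ c, (∑ i, Θ i c) = 1 ∨ (∑ i, Θ i c) = 2) ∧
        (Θ.det = 1 ∨ Θ.det = -1) ∧
        q = qtilde Θ} := by
  constructor
  · intro h
    show p ∈ Ideal.span (gens d)
    set q0 : MvPolynomial (Fin d) ℝ := qtilde (colM (fun _ : Fin d => none)) with hq0
    set c0 : ℝ := eval (fun _ => 1) p with hc0
    have hp' : ∀ ε : Fin d → ℝ, (∀ i, ε i = -1 ∨ ε i = 1) →
        eval ε (p - C c0 * q0) = 0 := by
      intro ε hε
      by_cases hne : ε = fun _ => (1:ℝ)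
      · subst hne
        rw [map_sub, map_mul, eval_C, hq0, eval_one_qtilde_id, mul_one, hc0, sub_self]
      · rw [map_sub, map_mul, eval_C, h ε hε hne,
          eval_gens_zero ε hε hne _ id_gen_mem, mul_zero, sub_zero]
    have hmem := sq_span_le hd (cube_mem d (p - C c0 * q0) hp')
    have hsplit : p = (p - C c0 * q0) + C c0 * q0 := by ring
    rw [hsplit]
    exact add_mem hmem (Ideal.mul_mem_left _ _ (Ideal.subset_span id_gen_mem))
  · intro hmem ε hε hne
    refine Submodule.span_induction (p := fun x _ => eval ε x = 0)
      (fun x hx => eval_gens_zero ε hε hne x hx) (map_zero _)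
      (fun a b _ _ ha hb => by
        show eval ε (a + b) = 0
        rw [map_add, ha, hb, add_zero])
      (fun a b _ hb => by
        show eval ε (a • b) = 0
        rw [smul_eq_mul, map_mul, hb, mul_zero]) hmem
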